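/- The harmonic-sum lower bound in the fully connected cluster: the sequence defined by the recursion (12) with λ_c = λ satisfies Δ_{S_1} ≥ ((k−1)²+k)/k² · Δ_c + (λ_e/λ)((k−1)/k · H_{k−1} + 1/k), which is at least Δ_c·(1 − 1/k) + (λ_e/λ)(1 − 1/k)·H_{k−1}; hence Δ_{S_1} = Ω(Δ_c + (λ_e/λ)log k). -/

import Mathlib

private lemma stmt_17_core (jR a K S lam lamE Δc Tj T' : ℝ)
    (hj : 1 ≤ jR) (ha : 1 ≤ a) (hK : K = jR + a) (hS : 0 ≤ S)
    (hl : 0 < lam) (hE : 0 < lamE)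
    (hTj : Tj = (1 + (K - 1) * (1 / jR + S)) / (a + 1))
    (hT' : T' = (1 + (K - 1) * S) / a)
    (X : ℝ) (hX : Δc + lamE / lam * T' ≤ X) :
    Δc + lamE / lam * Tj ≤
      (lamE + jR * lam / K * Δc + jR * (K - jR) * lam / (K - 1) * X) /
        (jR * lam / K + jR * (K - jR) * lam / (K - 1)) := by
  have hK1 : 1 ≤ K - 1 := by rw [hK]; linarith
  have hK0 : 0 < K := by linarith
  have hKjR : K - jR = a := by rw [hK]; ring
  rw [hKjR]
  have hD : 0 < jR * lam / K + jR * a * lam / (K - 1) := by positivity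
  have hT0 : 0 ≤ Tj := by
    rw [hTj]
    have h : 0 ≤ (K - 1) * (1 / jR + S) := by positivity
    have h2 : 0 ≤ 1 + (K - 1) * (1 / jR + S) := by linarith
    positivity
  have key : Tj * (jR / K + jR * a / (K - 1)) ≤ 1 + jR * a / (K - 1) * T' := by
    have h1 : jR / K + jR * a / (K - 1) ≤ jR / (K - 1) * (1 + a) := by
      have h3 : jR / K ≤ jR / (K - 1) := by
        apply div_le_div_of_nonneg_left (by linarith) (by linarith) (by linarith)
      have h4 : jR / (K - 1) * (1 + a) = jR / (K - 1) + jR * a / (K - 1) := by ring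
      linarith
    have h2 : Tj * (jR / (K - 1) * (1 + a)) = 1 + jR * a / (K - 1) * T' := by
      rw [hTj, hT']
      field_simp
      ring
    calc Tj * (jR / K + jR * a / (K - 1)) ≤ Tj * (jR / (K - 1) * (1 + a)) :=
          mul_le_mul_of_nonneg_left h1 hT0
      _ = 1 + jR * a / (K - 1) * T' := h2
  have key2 := mul_le_mul_of_nonneg_left key hE.le
  have mono : (lamE + jR * lam / K * Δc + jR * a * lam / (K - 1) * (Δc + lamE / lam * T')) /
        (jR * lam / K + jR * a * lam / (K - 1)) ≤
      (lamE + jR * lam / K * Δc + jR * a * lam / (K - 1) * X) /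
        (jR * lam / K + jR * a * lam / (K - 1)) := by
    gcongr
  refine le_trans ?_ mono
  rw [le_div_iff₀ hD]
  have e1 : (Δc + lamE / lam * Tj) * (jR * lam / K + jR * a * lam / (K - 1)) =
      Δc * (jR * lam / K + jR * a * lam / (K - 1)) +
        lamE * (Tj * (jR / K + jR * a / (K - 1))) := by
    field_simp
  have e2 : lamE + jR * lam / K * Δc + jR * a * lam / (K - 1) * (Δc + lamE / lam * T') =
      Δc * (jR * lam / K + jR * a * lam / (K - 1)) +
        lamE * (1 + jR * a / (K - 1) * T') := by
    field_simp
    ring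
  linarith

theorem stmt_17 (k : ℕ) (hk : 2 ≤ k) (lamE lam Δc : ℝ)
    (hE : 0 < lamE) (hl : 0 < lam) (hΔc : 0 ≤ Δc)
    (Δ : ℕ → ℝ)
    (hrec : ∀ j, 1 ≤ j → j ≤ k - 1 →
      Δ j = (lamE + ((j : ℝ) * lam / k) * Δc
          + ((j : ℝ) * ((k : ℝ) - j) * lam / ((k : ℝ) - 1)) * Δ (j + 1))
        / ((j : ℝ) * lam / k + (j : ℝ) * ((k : ℝ) - j) * lam / ((k : ℝ) - 1)))
    (hbnd : Δ k = Δc + lamE / lam) :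
    (((k : ℝ) - 1) ^ 2 + k) / (k : ℝ) ^ 2 * Δc
        + (lamE / lam) * (((k : ℝ) - 1) / k * (∑ l ∈ Finset.Icc 1 (k - 1), (1 : ℝ) / l)
            + 1 / k)
      ≤ Δ 1 ∧
    Δc * (1 - 1 / k) + (lamE / lam) * (1 - 1 / k)
        * (∑ l ∈ Finset.Icc 1 (k - 1), (1 : ℝ) / l)
      ≤ (((k : ℝ) - 1) ^ 2 + k) / (k : ℝ) ^ 2 * Δc
        + (lamE / lam) * (((k : ℝ) - 1) / k * (∑ l ∈ Finset.Icc 1 (k - 1), (1 : ℝ) / l)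
            + 1 / k) := by
  have hK2 : (2 : ℝ) ≤ (k : ℝ) := by exact_mod_cast hk
  have hK0 : (0 : ℝ) < (k : ℝ) := by linarith
  have key : ∀ i, i < k → Δc + lamE / lam *
      ((1 + ((k : ℝ) - 1) * ∑ l ∈ Finset.Icc (k - i) (k - 1), (1 : ℝ) / l) / ((i : ℝ) + 1))
      ≤ Δ (k - i) := by
    intro i
    induction i with
    | zero =>
      intro _
      have hempty : Finset.Icc k (k - 1) = ∅ := Finset.Icc_eq_empty (by omega)
      simp only [Nat.sub_zero, hempty, Finset.sum_empty, Nat.cast_zero, mul_zero, add_zero,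
        zero_add, div_one, mul_one]
      rw [hbnd]
    | succ i ih =>
      intro hi
      have hik : i < k := by omega
      have hj1 : 1 ≤ k - (i + 1) := by omega
      have hj2 : k - (i + 1) ≤ k - 1 := by omega
      have hjsucc : k - (i + 1) + 1 = k - i := by omega
      have hjR : ((k - (i + 1) : ℕ) : ℝ) = (k : ℝ) - ((i : ℝ) + 1) := by
        push_cast [Nat.cast_sub hi.le]
        ring
      have hins : Finset.Icc (k - (i + 1)) (k - 1)
          = insert (k - (i + 1)) (Finset.Icc (k - i) (k - 1)) := by
        ext x
        simp only [Finset.mem_Icc, Finset.mem_insert]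
        omega
      have hnm : k - (i + 1) ∉ Finset.Icc (k - i) (k - 1) := by
        simp only [Finset.mem_Icc]
        omega
      rw [hins, Finset.sum_insert hnm]
      rw [hrec (k - (i + 1)) hj1 hj2, hjsucc]
      have hX := ih hik
      refine stmt_17_core ((k - (i + 1) : ℕ) : ℝ) ((i : ℝ) + 1) (k : ℝ)
        (∑ l ∈ Finset.Icc (k - i) (k - 1), (1 : ℝ) / l) lam lamE Δc _ _
        ?_ (by linarith [Nat.cast_nonneg (α := ℝ) i]) ?_
        (Finset.sum_nonneg fun l _ => by positivity) hl hE ?_ rfl (Δ (k - i)) hX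
      · rw [hjR]
        have : ((i : ℝ) + 1) ≤ (k : ℝ) - 1 := by
          have : (i : ℝ) + 2 ≤ (k : ℝ) := by exact_mod_cast hi
          linarith
        linarith
      · rw [hjR]; ring
      · push_cast
        ring_nf
  have hmain := key (k - 1) (by omega)
  have h1 : k - (k - 1) = 1 := by omega
  have hc1 : ((k - 1 : ℕ) : ℝ) + 1 = (k : ℝ) := by
    push_cast [Nat.cast_sub (by omega : 1 ≤ k)]
    ring
  rw [h1, hc1] at hmain
  set H : ℝ := ∑ l ∈ Finset.Icc 1 (k - 1), (1 : ℝ) / l with hH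
  have hH0 : 0 ≤ H := Finset.sum_nonneg fun l _ => by positivity
  have hEq : (1 + ((k : ℝ) - 1) * H) / (k : ℝ) = ((k : ℝ) - 1) / k * H + 1 / k := by
    field_simp
    ring
  rw [hEq] at hmain
  have hr0 : 0 < lamE / lam := by positivity
  constructor
  · have hco : (((k : ℝ) - 1) ^ 2 + k) / (k : ℝ) ^ 2 * Δc ≤ Δc := by
      have h5 : (((k : ℝ) - 1) ^ 2 + k) / (k : ℝ) ^ 2 ≤ 1 := by
        rw [div_le_one (by positivity)]
        nlinarith
      exact mul_le_of_le_one_left hΔc h5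
    linarith
  · have e3 : Δc * (1 - 1 / (k : ℝ)) + (lamE / lam) * (1 - 1 / (k : ℝ)) * H
        + (Δc * (1 / (k : ℝ) ^ 2) + (lamE / lam) * (1 / (k : ℝ)))
        = (((k : ℝ) - 1) ^ 2 + k) / (k : ℝ) ^ 2 * Δc
          + (lamE / lam) * (((k : ℝ) - 1) / k * H + 1 / k) := by
      field_simp
      ring
    nlinarith [mul_nonneg hΔc (by positivity : (0:ℝ) ≤ 1 / (k : ℝ) ^ 2),
      mul_nonneg hr0.le (by positivity : (0:ℝ) ≤ 1 / (k : ℝ))]
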